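/- arXiv:1503.02553 — 5 statements merged into one kernel-verified Lean document; each statement's English description precedes it below -/
import Mathlib

section
/- For every ρ with 0 ≤ ρ < 0.289, the real symmetric 5×5 matrix with rows [1, -(1+ρ)/2, 0, -(1+ρ)/(2√2), 0], [-(1+ρ)/2, 1, 0, 0, 0], [0, 0, 1, 0, -1/2], [-(1+ρ)/(2√2), 0, 0, (1-ρ)/2, 0], [0, 0, -1/2, 0, 1] is positive definite. -/
set_option maxHeartbeats 4000000

private lemma sq_le_zero' {a : ℝ} (h : a ^ 2 ≤ 0) : a = 0 :=
  pow_eq_zero_iff two_ne_zero |>.mp (le_antisymm h (sq_nonneg a))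

theorem stmt3 (ρ : ℝ) (hρ0 : 0 ≤ ρ) (hρ1 : ρ < 0.289) :
    Matrix.PosDef (!![(1 : ℝ), -((1+ρ)/2), 0, -((1+ρ)/(2*Real.sqrt 2)), 0;
                      -((1+ρ)/2), 1, 0, 0, 0;
                      0, 0, 1, 0, -(1/2);
                      -((1+ρ)/(2*Real.sqrt 2)), 0, 0, (1-ρ)/2, 0;
                      0, 0, -(1/2), 0, 1]) := by
  refine Matrix.PosDef.of_dotProduct_mulVec_pos ?_ ?_
  · ext i j
    fin_cases i <;> fin_cases j <;>
      simp [Matrix.conjTranspose_apply, Matrix.vecHead, Matrix.vecTail]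
  · intro x hx
    simp only [dotProduct, Matrix.mulVec, Fin.sum_univ_five, star,
      Matrix.cons_val', Matrix.cons_val_zero, Matrix.cons_val_one, Matrix.head_cons,
      Matrix.empty_val', Matrix.cons_val_fin_one, Matrix.head_fin_const, Matrix.cons_val_two,
      Matrix.cons_val_three, Matrix.cons_val_four, Matrix.tail_cons, Matrix.of_apply, id]
    set s : ℝ := Real.sqrt 2 with hsdef
    have hs : s ^ 2 = 2 := Real.sq_sqrt (by norm_num)
    have hs0 : 0 < s := Real.sqrt_pos.mpr (by norm_num)
    have h2s : (1+ρ)/(2*s) = (1+ρ)*s/4 := by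
      rw [div_eq_div_iff (by positivity) (by norm_num)]
      nlinarith [hs]
    rw [h2s]
    have hB : 0 < 4 - (1+ρ)^2 := by nlinarith
    have hN : 0 < 2 - 7*ρ + ρ^3 := by
      nlinarith [mul_nonneg (by linarith : (0:ℝ) ≤ 0.289 - ρ)
        (by nlinarith : (0:ℝ) ≤ 7 - 0.289*ρ - ρ^2 - 0.289^2)]
    set E := x 0 * (1 * x 0 + -((1 + ρ) / 2) * x 1 + 0 * x 2 + -((1 + ρ) * s / 4) * x 3 + 0 * x 4) +
            x 1 * (-((1 + ρ) / 2) * x 0 + 1 * x 1 + 0 * x 2 + 0 * x 3 + 0 * x 4) +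
          x 2 * (0 * x 0 + 0 * x 1 + 1 * x 2 + 0 * x 3 + -(1 / 2) * x 4) +
        x 3 * (-((1 + ρ) * s / 4) * x 0 + 0 * x 1 + 0 * x 2 + (1 - ρ) / 2 * x 3 + 0 * x 4) +
      x 4 * (0 * x 0 + 0 * x 1 + -(1 / 2) * x 2 + 0 * x 3 + 1 * x 4) with hE
    have key : (4 - (1+ρ)^2) * E =
        (4 - (1+ρ)^2) * (x 0 - (1+ρ)/2 * x 1 - (1+ρ)*s/4 * x 3)^2
        + ((4 - (1+ρ)^2)/2 * x 1 - (1+ρ)^2*s/4 * x 3)^2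
        + (2 - 7*ρ + ρ^3)/2 * (x 3)^2
        + (4 - (1+ρ)^2) * (x 2 - x 4 / 2)^2
        + 3*(4 - (1+ρ)^2)/4 * (x 4)^2 := by
      rw [hE]
      linear_combination (-(1+ρ)^2/4 * (x 3)^2) * hs
    clear_value E
    by_contra hq
    push_neg at hq
    have hBE : (4 - (1+ρ)^2) * E ≤ 0 := mul_nonpos_of_nonneg_of_nonpos hB.le hq
    have t0 := sq_nonneg (x 0 - (1+ρ)/2 * x 1 - (1+ρ)*s/4 * x 3)
    have t1 := sq_nonneg ((4 - (1+ρ)^2)/2 * x 1 - (1+ρ)^2*s/4 * x 3)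
    have t2 := sq_nonneg (x 2 - x 4 / 2)
    have t3 := sq_nonneg (x 3)
    have t4 := sq_nonneg (x 4)
    have m0 := mul_nonneg hB.le t0
    have m2 := mul_nonneg hB.le t2
    have m4 := mul_nonneg hB.le t4
    have m3 : 0 ≤ (2 - 7*ρ + ρ^3)/2 * (x 3)^2 := mul_nonneg (by linarith) t3
    have h3 : x 3 = 0 := by
      apply sq_le_zero'
      have hx3 : (2 - 7*ρ + ρ^3)/2 * (x 3)^2 ≤ 0 := by linarith
      nlinarith [hx3, hN, t3]
    have h4 : x 4 = 0 := by
      apply sq_le_zero'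
      have hx4 : (4 - (1+ρ)^2) * (x 4)^2 ≤ 0 := by nlinarith [m0, t1, m2, m3]
      nlinarith [hx4, hB, t4]
    have h2 : x 2 = 0 := by
      have hc : (4 - (1+ρ)^2) * (x 2 - x 4/2)^2 ≤ 0 := by linarith
      have : x 2 - x 4/2 = 0 := by
        apply sq_le_zero'
        nlinarith [hc, hB, t2]
      linarith
    have h1 : x 1 = 0 := by
      have hc : ((4 - (1+ρ)^2)/2 * x 1 - (1+ρ)^2*s/4 * x 3)^2 ≤ 0 := by linarith
      have := sq_le_zero' hc
      rw [h3] at this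
      have : (4 - (1+ρ)^2)/2 * x 1 = 0 := by linarith [this]
      have hB2 : (4 - (1+ρ)^2)/2 ≠ 0 := by positivity
      exact (mul_eq_zero.mp this).resolve_left hB2
    have h0 : x 0 = 0 := by
      have hc : (4 - (1+ρ)^2) * (x 0 - (1+ρ)/2 * x 1 - (1+ρ)*s/4 * x 3)^2 ≤ 0 := by linarith
      have : x 0 - (1+ρ)/2 * x 1 - (1+ρ)*s/4 * x 3 = 0 := by
        apply sq_le_zero'
        nlinarith [hc, hB, t0]
      rw [h1, h3] at this
      linarith [this]
    apply hx
    funext i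
    fin_cases i
    · simpa using h0
    · simpa using h1
    · simpa using h2
    · simpa using h3
    · simpa using h4
end

section
/- Let H be a real inner product space, let A : H → H be a symmetric positive definite bounded linear operator with associated inner product (x,y)_A = ⟨Ax, y⟩, and let Q : H → H be symmetric positive definite. If ‖I - QA‖_A ≤ ρ for some 0 ≤ ρ < 1 (operator norm induced by the A-norm), then (1-ρ)⟨A⁻¹v, v⟩ ≤ ⟨Qv, v⟩ ≤ (1+ρ)⟨A⁻¹v, v⟩ for all v ∈ H. -/
open scoped RealInnerProductSpace

lemma cs_aux {H : Type*} [NormedAddCommGroup H] [InnerProductSpace ℝ H]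
    (A : H →ₗ[ℝ] H)
    (hAsymm : ∀ x y : H, ⟪A x, y⟫ = ⟪x, A y⟫)
    (hApos : ∀ x : H, 0 ≤ ⟪A x, x⟫) (x y : H) :
    ⟪A x, y⟫ ^ 2 ≤ ⟪A x, x⟫ * ⟪A y, y⟫ := by
  have key : ∀ t : ℝ, 0 ≤ ⟪A x, x⟫ * (t * t) + (2 * ⟪A x, y⟫) * t + ⟪A y, y⟫ := by
    intro t
    have h := hApos (t • x + y)
    have hsym : ⟪A y, x⟫ = ⟪A x, y⟫ := by
      rw [hAsymm y x, real_inner_comm]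
    simp only [map_add, map_smul, inner_add_left, inner_add_right,
      real_inner_smul_left, real_inner_smul_right, hsym] at h
    nlinarith [h]
  have hd := discrim_le_zero key
  simp only [discrim] at hd
  nlinarith [hd]

/-- If `A` and `Q` are symmetric positive definite operators on a finite-dimensional
real inner product space, `Ainv` is the inverse of `A`, and `‖I - QA‖_A ≤ ρ` with
`0 ≤ ρ < 1`, then `(1-ρ)⟨A⁻¹v, v⟩ ≤ ⟨Qv, v⟩ ≤ (1+ρ)⟨A⁻¹v, v⟩` for all `v`. -/
theorem stmt4 {H : Type*} [NormedAddCommGroup H] [InnerProductSpace ℝ H]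
    [FiniteDimensional ℝ H]
    (A Q Ainv : H →ₗ[ℝ] H) (ρ : ℝ)
    (hAsymm : ∀ x y : H, ⟪A x, y⟫ = ⟪x, A y⟫)
    (hApos : ∀ x : H, x ≠ 0 → 0 < ⟪A x, x⟫)
    (hQsymm : ∀ x y : H, ⟪Q x, y⟫ = ⟪x, Q y⟫)
    (hQpos : ∀ x : H, x ≠ 0 → 0 < ⟪Q x, x⟫)
    (hInv1 : A ∘ₗ Ainv = LinearMap.id) (hInv2 : Ainv ∘ₗ A = LinearMap.id)
    (hρ0 : 0 ≤ ρ) (hρ1 : ρ < 1)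
    (hbound : ∀ x : H, ⟪A (x - Q (A x)), x - Q (A x)⟫ ≤ ρ^2 * ⟪A x, x⟫) :
    ∀ v : H, (1 - ρ) * ⟪Ainv v, v⟫ ≤ ⟪Q v, v⟫ ∧ ⟪Q v, v⟫ ≤ (1 + ρ) * ⟪Ainv v, v⟫ := by
  intro v
  have hApos' : ∀ z : H, 0 ≤ ⟪A z, z⟫ := by
    intro z
    by_cases hz : z = 0
    · simp [hz]
    · exact (hApos z hz).le
  set x := Ainv v with hx
  have hAx : A x = v := by
    have := congrArg (fun f => f v) hInv1
    simpa using this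
  set e : H := x - Q v with he
  set a : ℝ := ⟪A x, x⟫ with haa
  have ha0 : 0 ≤ a := hApos' x
  have haInv : ⟪Ainv v, v⟫ = a := by
    rw [haa, ← hx]
    conv_lhs => rw [← hAx]
    rw [real_inner_comm]
  set t : ℝ := ⟪A x, e⟫ with ht
  have hQ : ⟪Q v, v⟫ = a - t := by
    rw [ht, he, inner_sub_right, ← haa, hAx, real_inner_comm]
    ring
  have hb : ⟪A e, e⟫ ≤ ρ ^ 2 * a := by
    have h := hbound x
    rw [hAx] at h
    have hva : (⟪v, x⟫ : ℝ) = a := by rw [haa, hAx]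
    rwa [← he, hva] at h
  have hcs : t ^ 2 ≤ a * ⟪A e, e⟫ := cs_aux A hAsymm hApos' x e
  have hee : 0 ≤ ⟪A e, e⟫ := hApos' e
  have ht2 : t ^ 2 ≤ ρ ^ 2 * a ^ 2 := by nlinarith
  have habs : -(ρ * a) ≤ t ∧ t ≤ ρ * a := by
    constructor <;> nlinarith [mul_nonneg hρ0 ha0]
  rw [haInv, hQ]
  constructor <;> nlinarith [habs.1, habs.2]
end

section
/- Let H be a real inner product space and A, Q : H → H SPD operators with ‖I - QA‖_A ≤ ρ, 0 ≤ ρ < 1. Then (1+ρ)^{-1}⟨Av, v⟩ ≤ ⟨Q⁻¹v, v⟩ ≤ (1-ρ)^{-1}⟨Av, v⟩ for all v ∈ H. -/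
open scoped RealInnerProductSpace

private lemma cs_form {H : Type*} [NormedAddCommGroup H] [InnerProductSpace ℝ H]
    (B : H →ₗ[ℝ] H) (hs : ∀ x y : H, ⟪B x, y⟫ = ⟪x, B y⟫)
    (hp : ∀ x : H, 0 ≤ ⟪B x, x⟫) (x y : H) :
    ⟪B x, y⟫ ^ 2 ≤ ⟪B x, x⟫ * ⟪B y, y⟫ := by
  have h : ∀ t : ℝ, 0 ≤ ⟪B y, y⟫ * (t * t) + (2 * ⟪B x, y⟫) * t + ⟪B x, x⟫ := by
    intro t
    have h0 := hp (x + t • y)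
    have e : ⟪B (x + t • y), x + t • y⟫
        = ⟪B x, x⟫ + ⟪B x, y⟫ * t + ⟪B y, x⟫ * t + ⟪B y, y⟫ * (t * t) := by
      simp [map_add, map_smul, inner_add_left, inner_add_right,
        real_inner_smul_left, real_inner_smul_right]
      ring
    have hsym : ⟪B y, x⟫ = ⟪B x, y⟫ := by
      rw [hs y x, real_inner_comm]
    rw [e, hsym] at h0
    linarith
  have := discrim_le_zero (a := ⟪B y, y⟫) (b := 2 * ⟪B x, y⟫) (c := ⟪B x, x⟫) h
  rw [discrim] at this
  nlinarith [this]

/-- If `A` and `Q` are SPD operators with `‖I - QA‖_A ≤ ρ`, `0 ≤ ρ < 1`, then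
`(1+ρ)⁻¹⟨Av, v⟩ ≤ ⟨Q⁻¹v, v⟩ ≤ (1-ρ)⁻¹⟨Av, v⟩` for all `v`. -/
theorem stmt5 {H : Type*} [NormedAddCommGroup H] [InnerProductSpace ℝ H]
    [FiniteDimensional ℝ H]
    (A Q Qinv : H →ₗ[ℝ] H) (ρ : ℝ)
    (hAsymm : ∀ x y : H, ⟪A x, y⟫ = ⟪x, A y⟫)
    (hApos : ∀ x : H, x ≠ 0 → 0 < ⟪A x, x⟫)
    (hQsymm : ∀ x y : H, ⟪Q x, y⟫ = ⟪x, Q y⟫)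
    (hQpos : ∀ x : H, x ≠ 0 → 0 < ⟪Q x, x⟫)
    (hInv1 : Q ∘ₗ Qinv = LinearMap.id) (hInv2 : Qinv ∘ₗ Q = LinearMap.id)
    (hρ0 : 0 ≤ ρ) (hρ1 : ρ < 1)
    (hbound : ∀ x : H, ⟪A (x - Q (A x)), x - Q (A x)⟫ ≤ ρ^2 * ⟪A x, x⟫) :
    ∀ v : H, (1 + ρ)⁻¹ * ⟪A v, v⟫ ≤ ⟪Qinv v, v⟫ ∧
      ⟪Qinv v, v⟫ ≤ (1 - ρ)⁻¹ * ⟪A v, v⟫ := by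
  -- nonnegativity of the forms
  have hAnn : ∀ x : H, 0 ≤ ⟪A x, x⟫ := by
    intro x
    by_cases hx : x = 0
    · simp [hx]
    · exact (hApos x hx).le
  have hQnn : ∀ x : H, 0 ≤ ⟪Q x, x⟫ := by
    intro x
    by_cases hx : x = 0
    · simp [hx]
    · exact (hQpos x hx).le
  have hQQinv : ∀ x : H, Q (Qinv x) = x := fun x => by
    have := LinearMap.congr_fun hInv1 x; simpa using this
  have hQinvQ : ∀ x : H, Qinv (Q x) = x := fun x => by
    have := LinearMap.congr_fun hInv2 x; simpa using this
  -- Qinv is symmetric and nonneg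
  have hQisymm : ∀ x y : H, ⟪Qinv x, y⟫ = ⟪x, Qinv y⟫ := by
    intro x y
    calc ⟪Qinv x, y⟫ = ⟪Qinv x, Q (Qinv y)⟫ := by rw [hQQinv]
    _ = ⟪Q (Qinv x), Qinv y⟫ := (hQsymm _ _).symm
    _ = ⟪x, Qinv y⟫ := by rw [hQQinv]
  have hQinn : ∀ x : H, 0 ≤ ⟪Qinv x, x⟫ := by
    intro x
    calc (0:ℝ) ≤ ⟪Q (Qinv x), Qinv x⟫ := hQnn _
    _ = ⟪Qinv x, Q (Qinv x)⟫ := hQsymm _ _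
    _ = ⟪Qinv x, x⟫ := by rw [hQQinv]
  -- key bound: |⟪Ax,x⟫ - ⟪QAx, Ax⟫| ≤ ρ * ⟪Ax,x⟫
  have key : ∀ x : H, |⟪A x, x⟫ - ⟪Q (A x), A x⟫| ≤ ρ * ⟪A x, x⟫ := by
    intro x
    have hcs := cs_form A hAsymm hAnn (x - Q (A x)) x
    have hb := hbound x
    have hd : ⟪A (x - Q (A x)), x⟫ = ⟪A x, x⟫ - ⟪Q (A x), A x⟫ := by
      rw [map_sub, inner_sub_left]
      congr 1
      rw [hAsymm, real_inner_comm]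
    rw [hd] at hcs
    have h1 : (⟪A x, x⟫ - ⟪Q (A x), A x⟫) ^ 2 ≤ (ρ * ⟪A x, x⟫) ^ 2 := by
      nlinarith [hAnn x, mul_le_mul_of_nonneg_right hb (hAnn x)]
    have h2 : 0 ≤ ρ * ⟪A x, x⟫ := mul_nonneg hρ0 (hAnn x)
    rw [abs_le]
    constructor <;> nlinarith [h1, h2]
  -- A is surjective
  have hAinj : Function.Injective A := by
    intro x y hxy
    by_contra hne
    have hx : x - y ≠ 0 := sub_ne_zero.mpr hne
    have := hApos (x - y) hx
    rw [map_sub, hxy, sub_self] at this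
    simp at this
  have hAsurj : Function.Surjective A :=
    (LinearMap.injective_iff_surjective).mp hAinj
  intro v
  by_cases hv : v = 0
  · simp [hv]
  have hc : 0 < ⟪A v, v⟫ := hApos v hv
  set c := ⟪A v, v⟫ with hcdef
  set q := ⟪Qinv v, v⟫ with hqdef
  have hw : Q (Qinv v) = v := hQQinv v
  have hwne : Qinv v ≠ 0 := by
    intro h0
    rw [h0, map_zero] at hw
    exact hv hw.symm
  have hq : 0 < q := by
    have := hQpos (Qinv v) hwne
    calc (0:ℝ) < ⟪Q (Qinv v), Qinv v⟫ := this
    _ = ⟪Qinv v, Q (Qinv v)⟫ := hQsymm _ _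
    _ = q := by rw [hw, hqdef]
  have hρ1' : 0 < 1 - ρ := by linarith
  have hρ0' : 0 < 1 + ρ := by linarith
  constructor
  · -- (1+ρ)⁻¹ c ≤ q, i.e. c ≤ (1+ρ) q
    -- c = ⟪Qinv (Q (A v)), v⟫; CS for Qinv
    have hcs := cs_form Qinv hQisymm hQinn (Q (A v)) v
    have e1 : ⟪Qinv (Q (A v)), v⟫ = c := by rw [hQinvQ]
    have e2 : ⟪Qinv (Q (A v)), Q (A v)⟫ = ⟪Q (A v), A v⟫ := by
      rw [hQinvQ, real_inner_comm]
    rw [e1, e2] at hcs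
    have hup : ⟪Q (A v), A v⟫ ≤ (1 + ρ) * c := by
      have := key v
      have h := abs_le.mp this
      linarith [h.1]
    have : c ^ 2 ≤ ((1 + ρ) * c) * q :=
      hcs.trans (mul_le_mul_of_nonneg_right hup hq.le)
    rw [inv_mul_le_iff₀ hρ0']
    nlinarith
  · -- (1-ρ) q ≤ c
    obtain ⟨x, hx⟩ := hAsurj (Qinv v)
    have elow : (1 - ρ) * ⟪A x, x⟫ ≤ ⟪Q (A x), A x⟫ := by
      have h := abs_le.mp (key x)
      linarith [h.2]
    have elow' : (1 - ρ) * ⟪A x, x⟫ ≤ q := by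
      calc (1 - ρ) * ⟪A x, x⟫ ≤ ⟪Q (A x), A x⟫ := elow
      _ = ⟪Q (Qinv v), Qinv v⟫ := by rw [hx]
      _ = ⟪Qinv v, Q (Qinv v)⟫ := hQsymm _ _
      _ = q := by rw [hw, hqdef]
    have eq1 : q = ⟪A v, x⟫ := by
      rw [hqdef, ← hx, real_inner_comm, hAsymm, real_inner_comm]
    have hcs := cs_form A hAsymm hAnn v x
    rw [← eq1] at hcs
    have hAx : ⟪A x, x⟫ ≤ (1 - ρ)⁻¹ * q := by
      rw [le_inv_mul_iff₀ hρ1']  -- maybe wrong name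
      linarith [elow']
    have : q ^ 2 ≤ c * ((1 - ρ)⁻¹ * q) :=
      hcs.trans (mul_le_mul_of_nonneg_left hAx hc.le)
    have hfin : (1 - ρ) * q ≤ c := by
      have h2 : q * q ≤ c * (1 - ρ)⁻¹ * q := by nlinarith
      have h3 : q ≤ c * (1 - ρ)⁻¹ := le_of_mul_le_mul_right (by nlinarith) hq
      calc (1 - ρ) * q ≤ (1 - ρ) * (c * (1 - ρ)⁻¹) := by nlinarith
      _ = c := by field_simp
    rw [le_inv_mul_iff₀ hρ1']
    linarith
end

section
/- Let H₁, H₂ be finite-dimensional real inner product spaces, A₁ : H₁ → H₁ SPD, B : H₁ → H₂ linear, and H₂-operator H₂op : H₂ → H₂ SPD. Suppose the inf-sup condition holds: for every x₂ ∈ H₂, sup over nonzero x₁ of ⟨Bx₁, x₂⟩ / ‖x₁‖_{A₁} ≥ ζ‖x₂‖_{H₂op} with ζ > 0. Then for the block operator 𝓐 = [[A₁, -B*],[B, 0]] on H₁ × H₂ and the block lower triangular preconditioner 𝓜_L = [[A₁, 0],[B, H₂op]]⁻¹, there exists γ > 0 depending only on ζ such that ⟨x, 𝓜_L 𝓐 x⟩_{𝓜⁻¹}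 ≥ γ ⟨x, x⟩_{𝓜⁻¹} for all x ∈ H₁ × H₂, where 𝓜⁻¹ = diag(A₁, H₂op). -/
open scoped RealInnerProductSpace

/-- Lower field-of-values bound for the exact block lower triangular preconditioner
`𝓜_L = [[A₁, 0],[B, H₂op]]⁻¹` applied to `𝓐 = [[A₁, -B*],[B, 0]]`, under the
inf-sup condition. Here `(y₁, y₂) = 𝓜_L 𝓐 (x₁, x₂)` is characterized by the two
equations `A₁ y₁ = A₁ x₁ - B* x₂` and `B y₁ + H₂op y₂ = B x₁`. -/
theorem stmt6 {H₁ H₂ : Type*}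
    [NormedAddCommGroup H₁] [InnerProductSpace ℝ H₁] [FiniteDimensional ℝ H₁]
    [NormedAddCommGroup H₂] [InnerProductSpace ℝ H₂] [FiniteDimensional ℝ H₂]
    (A₁ : H₁ →ₗ[ℝ] H₁) (B : H₁ →ₗ[ℝ] H₂) (H₂op : H₂ →ₗ[ℝ] H₂) (ζ : ℝ)
    (hA₁symm : ∀ x y : H₁, ⟪A₁ x, y⟫ = ⟪x, A₁ y⟫)
    (hA₁pos : ∀ x : H₁, x ≠ 0 → 0 < ⟪A₁ x, x⟫)
    (hHsymm : ∀ x y : H₂, ⟪H₂op x, y⟫ = ⟪x, H₂op y⟫)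
    (hHpos : ∀ x : H₂, x ≠ 0 → 0 < ⟪H₂op x, x⟫)
    (hζ : 0 < ζ)
    (hinfsup : ∀ x₂ : H₂, ζ * Real.sqrt ⟪H₂op x₂, x₂⟫ ≤
      ⨆ x₁ : {x : H₁ // x ≠ 0},
        ⟪B (x₁ : H₁), x₂⟫ / Real.sqrt ⟪A₁ (x₁ : H₁), (x₁ : H₁)⟫) :
    ∃ γ > (0 : ℝ), ∀ (x₁ y₁ : H₁) (x₂ y₂ : H₂),
      A₁ y₁ = A₁ x₁ - (LinearMap.adjoint B) x₂ →
      B y₁ + H₂op y₂ = B x₁ →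
      ⟪A₁ x₁, y₁⟫ + ⟪H₂op x₂, y₂⟫ ≥ γ * (⟪A₁ x₁, x₁⟫ + ⟪H₂op x₂, x₂⟫) := by
  classical
  have hA₁nn : ∀ x : H₁, 0 ≤ ⟪A₁ x, x⟫ := by
    intro x
    rcases eq_or_ne x 0 with rfl | hx
    · simp
    · exact (hA₁pos x hx).le
  have hHnn : ∀ x : H₂, 0 ≤ ⟪H₂op x, x⟫ := by
    intro x
    rcases eq_or_ne x 0 with rfl | hx
    · simp
    · exact (hHpos x hx).le
  -- Cauchy–Schwarz for the A₁ bilinear form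
  have CS : ∀ u v : H₁, ⟪A₁ u, v⟫ ≤ Real.sqrt ⟪A₁ u, u⟫ * Real.sqrt ⟪A₁ v, v⟫ := by
    intro u v
    rcases eq_or_ne u 0 with rfl | hu
    · simp
    rcases eq_or_ne v 0 with rfl | hv
    · simp
    have ha : (0:ℝ) < ⟪A₁ u, u⟫ := hA₁pos u hu
    have hb : (0:ℝ) < ⟪A₁ v, v⟫ := hA₁pos v hv
    set a := ⟪A₁ u, u⟫ with ha'
    set b := ⟪A₁ v, v⟫ with hb'
    have hsymm : ⟪A₁ v, u⟫ = ⟪A₁ u, v⟫ := by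
      rw [hA₁symm v u]; exact real_inner_comm _ _
    have key : (0:ℝ) ≤ ⟪A₁ (Real.sqrt b • u - Real.sqrt a • v),
        Real.sqrt b • u - Real.sqrt a • v⟫ := hA₁nn _
    have expand : ⟪A₁ (Real.sqrt b • u - Real.sqrt a • v),
        Real.sqrt b • u - Real.sqrt a • v⟫
        = Real.sqrt b * Real.sqrt b * a - 2 * (Real.sqrt a * Real.sqrt b) * ⟪A₁ u, v⟫
          + Real.sqrt a * Real.sqrt a * b := by
      simp only [map_sub, map_smul, inner_sub_left, inner_sub_right,
        real_inner_smul_left, real_inner_smul_right, hsymm]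
      ring
    have hsa : Real.sqrt a * Real.sqrt a = a := Real.mul_self_sqrt ha.le
    have hsb : Real.sqrt b * Real.sqrt b = b := Real.mul_self_sqrt hb.le
    have hsap : 0 < Real.sqrt a := Real.sqrt_pos.mpr ha
    have hsbp : 0 < Real.sqrt b := Real.sqrt_pos.mpr hb
    nlinarith [key, expand, mul_pos hsap hsbp]
  refine ⟨(1/2) * min 1 (ζ^2),
    mul_pos (by norm_num) (lt_min one_pos (pow_pos hζ 2)), ?_⟩
  intro x₁ y₁ x₂ y₂ h1 h2
  set e := x₁ - y₁ with he
  have hBstar : (LinearMap.adjoint B) x₂ = A₁ e := by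
    rw [he, map_sub, h1]; abel
  set a := ⟪A₁ x₁, x₁⟫ with ha'
  set t := ⟪A₁ e, e⟫ with ht'
  set c := ⟪A₁ e, x₁⟫ with hc'
  set h := ⟪H₂op x₂, x₂⟫ with hh'
  have hS1 : ⟪A₁ x₁, y₁⟫ = a - c := by
    have hy : y₁ = x₁ - e := by rw [he]; abel
    rw [hy, inner_sub_right]
    have : ⟪A₁ x₁, e⟫ = c := by
      rw [hA₁symm x₁ e, hc']; exact real_inner_comm _ _
    rw [this]
  have hS2 : ⟪H₂op x₂, y₂⟫ = t := by
    have hBy : H₂op y₂ = B e := by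
      rw [he, map_sub]
      have : H₂op y₂ = B x₁ - B y₁ := by rw [← h2]; abel
      rw [this]
    calc ⟪H₂op x₂, y₂⟫ = ⟪x₂, H₂op y₂⟫ := hHsymm x₂ y₂
      _ = ⟪x₂, B e⟫ := by rw [hBy]
      _ = ⟪B e, x₂⟫ := real_inner_comm _ _
      _ = ⟪e, (LinearMap.adjoint B) x₂⟫ := (LinearMap.adjoint_inner_right B e x₂).symm
      _ = ⟪e, A₁ e⟫ := by rw [hBstar]
      _ = t := real_inner_comm _ _
  have hsup : (⨆ x₁ : {x : H₁ // x ≠ 0},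
      ⟪B (x₁ : H₁), x₂⟫ / Real.sqrt ⟪A₁ (x₁ : H₁), (x₁ : H₁)⟫) ≤ Real.sqrt t := by
    apply Real.iSup_le
    · rintro ⟨x, hx⟩
      have hax : 0 < ⟪A₁ x, x⟫ := hA₁pos x hx
      have hBx : ⟪B x, x₂⟫ = ⟪A₁ e, x⟫ := by
        rw [← LinearMap.adjoint_inner_right B x x₂, hBstar]
        exact real_inner_comm _ _
      simp only
      rw [hBx, div_le_iff₀ (Real.sqrt_pos.mpr hax)]
      exact CS e x
    · exact Real.sqrt_nonneg t
  have hst : ζ * Real.sqrt h ≤ Real.sqrt t := (hinfsup x₂).trans hsup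
  have ht2 : ζ^2 * h ≤ t := by
    have hmul := mul_self_le_mul_self
      (mul_nonneg hζ.le (Real.sqrt_nonneg h)) hst
    nlinarith [Real.mul_self_sqrt (hHnn x₂), Real.mul_self_sqrt (hA₁nn e)]
  have hCS : c ≤ Real.sqrt t * Real.sqrt a := CS e x₁
  have hAM : Real.sqrt t * Real.sqrt a ≤ (t + a) / 2 := by
    nlinarith [sq_nonneg (Real.sqrt t - Real.sqrt a),
      Real.sq_sqrt (hA₁nn e), Real.sq_sqrt (hA₁nn x₁)]
  rw [hS1, hS2]
  have hmin1 : min 1 (ζ^2) * a ≤ a :=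
    (mul_le_of_le_one_left (hA₁nn x₁) (min_le_left _ _)).trans_eq (by rfl)
  have hmin2 : min 1 (ζ^2) * h ≤ ζ^2 * h :=
    mul_le_mul_of_nonneg_right (min_le_right _ _) (hHnn x₂)
  linarith
end

section
/- For real numbers ξ₁, ξ₂, ξ₃, ξ₄, ξ₅ and ρ ∈ [0, 0.289), the quadratic form ξ₁² - (1+ρ)ξ₁ξ₂ - ((1+ρ)/√2)ξ₁ξ₄ + ξ₂² + ξ₃² - ξ₃ξ₅ + ((1-ρ)/2)ξ₄² + ξ₅² admits a positive lower bound γ₀(ξ₁² + ξ₂² + ξ₃² + ξ₄² + ξ₅²) for some γ₀ > 0 depending only on ρ. -/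
/-- scalar inequality: key determinant bound survives subtracting γ. -/
lemma aux_scalar (c γ A B : ℝ) (h1 : 0 ≤ γ) (h2 : γ ≤ 1/8) (hc : c ≤ 1/2)
    (hcγ : γ ≤ c) (hA : 0 ≤ A) (hB : 0 ≤ B) (h0 : c - A*c - B ≥ 2*γ) :
    (1-γ)^2*(c-γ) - A*(c-γ) - B*(1-γ) ≥ 0 := by
  nlinarith [mul_nonneg h1 hA, mul_nonneg h1 hB, mul_nonneg h1 h1,
    mul_nonneg (mul_nonneg h1 h1) h1, mul_nonneg h1 (by linarith : (0:ℝ) ≤ 1 - 2*c),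
    mul_nonneg (mul_nonneg h1 h1) (by linarith : (0:ℝ) ≤ c), sq_nonneg γ]

/-- coercivity of the 3×3 block, abstract version. -/
lemma aux_quad (γ c a s : ℝ) (hγ1 : γ < 1) (hγc : γ < c) (hs2 : s^2 = 2)
    (hf : (1-γ)^2*(c-γ) - a^2*(c-γ) - (a^2/2)*(1-γ) ≥ 0)
    (ξ₁ ξ₂ ξ₄ : ℝ) :
    ξ₁^2 - 2*a*ξ₁*ξ₂ - (a*s)*ξ₁*ξ₄ + ξ₂^2 + c*ξ₄^2 ≥ γ*(ξ₁^2+ξ₂^2+ξ₄^2) := by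
  have h1 : (0:ℝ) < 1 - γ := by linarith
  have h2 : (0:ℝ) < c - γ := by linarith
  have key : (1-γ)*(c-γ)*(ξ₁^2 - 2*a*ξ₁*ξ₂ - (a*s)*ξ₁*ξ₄ + ξ₂^2 + c*ξ₄^2
      - γ*(ξ₁^2+ξ₂^2+ξ₄^2)) ≥ 0 := by
    have eq : (1-γ)*(c-γ)*(ξ₁^2 - 2*a*ξ₁*ξ₂ - (a*s)*ξ₁*ξ₄ + ξ₂^2 + c*ξ₄^2
        - γ*(ξ₁^2+ξ₂^2+ξ₄^2))
        = (c-γ)*((1-γ)*ξ₂ - a*ξ₁)^2 + (1-γ)*((c-γ)*ξ₄ - (a*s/2)*ξ₁)^2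
          + ((1-γ)^2*(c-γ) - a^2*(c-γ) - (a^2/2)*(1-γ))*ξ₁^2
          - (1-γ)*(a^2/4)*(s^2-2)*ξ₁^2 := by ring
    rw [eq, hs2]
    have := mul_nonneg h2.le (sq_nonneg ((1-γ)*ξ₂ - a*ξ₁))
    have := mul_nonneg h1.le (sq_nonneg ((c-γ)*ξ₄ - (a*s/2)*ξ₁))
    have := mul_nonneg hf (sq_nonneg ξ₁)
    nlinarith [this]
  nlinarith [key, mul_pos h1 h2]

/-- Coercivity of the 5×5 quadratic form in the inexact block lower triangular
preconditioner analysis, for `0 ≤ ρ < 0.289`. -/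
theorem stmt17 (ρ : ℝ) (hρ0 : 0 ≤ ρ) (hρ1 : ρ < 0.289) :
    ∃ γ₀ > (0 : ℝ), ∀ ξ₁ ξ₂ ξ₃ ξ₄ ξ₅ : ℝ,
      ξ₁^2 - (1 + ρ) * ξ₁ * ξ₂ - ((1 + ρ) / Real.sqrt 2) * ξ₁ * ξ₄
        + ξ₂^2 + ξ₃^2 - ξ₃ * ξ₅ + ((1 - ρ)/2) * ξ₄^2 + ξ₅^2
      ≥ γ₀ * (ξ₁^2 + ξ₂^2 + ξ₃^2 + ξ₄^2 + ξ₅^2) := by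
  have hδ : 0 < ρ^3 - 7*ρ + 2 := by
    nlinarith [mul_pos (by linarith : (0:ℝ) < 0.289 - ρ)
      (by nlinarith : (0:ℝ) < 7 - (ρ^2 + 0.289*ρ + 0.289^2))]
  have hδ2 : ρ^3 - 7*ρ + 2 ≤ 2 := by
    nlinarith [mul_nonneg hρ0 (by nlinarith : (0:ℝ) ≤ 7 - ρ^2)]
  refine ⟨(ρ^3 - 7*ρ + 2)/16, by positivity, ?_⟩
  intro ξ₁ ξ₂ ξ₃ ξ₄ ξ₅
  set γ : ℝ := (ρ^3 - 7*ρ + 2)/16 with hγdef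
  have hγpos : 0 < γ := by positivity
  have hγ8 : γ ≤ 1/8 := by rw [hγdef]; linarith
  have hs2 : (Real.sqrt 2)^2 = 2 := Real.sq_sqrt (by norm_num)
  have hspos : 0 < Real.sqrt 2 := Real.sqrt_pos.mpr (by norm_num)
  have hss : Real.sqrt 2 * Real.sqrt 2 = 2 := Real.mul_self_sqrt (by norm_num)
  have hdiv : (1+ρ)/Real.sqrt 2 = ((1+ρ)/2) * Real.sqrt 2 := by
    rw [div_eq_iff (ne_of_gt hspos), mul_assoc, hss]; ring
  have hc2 : γ < (1-ρ)/2 := by rw [hγdef]; nlinarith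
  have hf : (1-γ)^2*((1-ρ)/2-γ) - ((1+ρ)/2)^2*((1-ρ)/2-γ)
      - (((1+ρ)/2)^2/2)*(1-γ) ≥ 0 := by
    apply aux_scalar _ _ _ _ hγpos.le hγ8 (by linarith) hc2.le
      (by positivity) (by positivity)
    rw [hγdef]; nlinarith
  have h124 := aux_quad γ ((1-ρ)/2) ((1+ρ)/2) (Real.sqrt 2)
    (by linarith) hc2 hs2 hf ξ₁ ξ₂ ξ₄
  have h35 : ξ₃^2 - ξ₃*ξ₅ + ξ₅^2 ≥ γ*(ξ₃^2+ξ₅^2) := by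
    nlinarith [sq_nonneg (ξ₃-ξ₅), sq_nonneg ξ₃, sq_nonneg ξ₅]
  have hrw : (1 + ρ) * ξ₁ * ξ₂ = 2*((1+ρ)/2)*ξ₁*ξ₂ := by ring
  rw [hdiv, hrw]
  nlinarith [h124, h35]
end
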